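/- Let p(1),...,p(A) be a probability vector with all p(a) > 0, γ = Σ a·p(a), γ(a) = (1/γ)Σ_{b≥a}p(b). Fix k ≥ 1 and define, for each vector ū = (u(1),...,u(A)) of nonnegative integers with Σu(a) = k, π_k(ū) = (k choose u(1),...,u(A))·Π γ(a)^{u(a)}, and A_{ūv̄} = 1_{v(a) ≥ u(a+1) ∀a} · (u(1) choose v(1)−u(2),...,v(A−1)−u(A), v(A)) · Π_{a=1}^A p(a)^{v(a)−u(a+1)} when Σv(a) = k (with u(A+1) := 0), and 0 otherwise. Then for every v̄ with Σv(a) = k, Σ_{ū: Σu=k} π_k(ū)·A_{ūv̄} = π_k(v̄). -/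

import Mathlib

/-- Shift of an age configuration: `shift u a = u (a+1)`, with the
convention `u (A+1) = 0`. -/
def ageShift {A : ℕ} (u : Fin A → ℕ) : Fin A → ℕ :=
  fun a => if h : (a : ℕ) + 1 < A then u ⟨(a : ℕ) + 1, h⟩ else 0

/-- The asymptotic ancestral transition probability `A_{ūv̄}` of (25). -/
noncomputable def ancestralTrans {A : ℕ} (p : Fin A → ℝ) (u v : Fin A → ℕ) : ℝ :=
  if ∀ a, ageShift u a ≤ v a then
    (Nat.multinomial Finset.univ (fun a => v a - ageShift u a) : ℝ) *
      ∏ a, p a ^ (v a - ageShift u a)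
  else 0

lemma binom_aux (x y : ℝ) (m : ℕ) :
    ∑ j ∈ Finset.range (m+1), x ^ (m - j) * y ^ j / ((m - j).factorial * j.factorial)
      = (x + y) ^ m / m.factorial := by
  rw [add_comm x y, add_pow, Finset.sum_div]
  refine Finset.sum_congr rfl fun j hj => ?_
  have hjm : j ≤ m := Nat.lt_succ_iff.mp (Finset.mem_range.mp hj)
  have h := Nat.choose_mul_factorial_mul_factorial hjm
  have h1 : ((m - j).factorial : ℝ) ≠ 0 := Nat.cast_ne_zero.mpr (Nat.factorial_ne_zero _)
  have h2 : (j.factorial : ℝ) ≠ 0 := Nat.cast_ne_zero.mpr (Nat.factorial_ne_zero _)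
  have h3 : (m.factorial : ℝ) ≠ 0 := Nat.cast_ne_zero.mpr (Nat.factorial_ne_zero _)
  field_simp
  rw [← h]
  push_cast
  ring

lemma multinomial_cast {m : ℕ} (f : Fin m → ℕ) :
    (Nat.multinomial Finset.univ f : ℝ)
      = (∑ a, f a).factorial / ∏ a, ((f a).factorial : ℝ) := by
  have h := Nat.multinomial_spec Finset.univ f
  have hne : (∏ a, ((f a).factorial : ℝ)) ≠ 0 := by
    apply Finset.prod_ne_zero_iff.mpr
    intro a _
    exact Nat.cast_ne_zero.mpr (Nat.factorial_ne_zero _)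
  rw [eq_div_iff hne, mul_comm]
  exact_mod_cast congrArg (Nat.cast : ℕ → ℝ) h

lemma ageShift_castSucc {n : ℕ} (u : Fin (n+1) → ℕ) (i : Fin n) :
    ageShift u i.castSucc = u i.succ := by
  have h : ((i.castSucc : Fin (n+1)) : ℕ) + 1 < n + 1 := by
    simp
  simp only [ageShift, dif_pos h]
  exact congrArg u (Fin.ext (by simp))

lemma ageShift_last {n : ℕ} (u : Fin (n+1) → ℕ) : ageShift u (Fin.last n) = 0 := by
  simp [ageShift]


theorem multinomial_stationary_for_ancestral_process
    (A : ℕ) (hA : 1 ≤ A) (p : Fin A → ℝ)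
    (hp : ∀ a, 0 < p a) (hpsum : ∑ a, p a = 1)
    (γ : ℝ) (hγ : γ = ∑ a : Fin A, (((a : ℕ) : ℝ) + 1) * p a)
    (G : Fin A → ℝ) (hG : ∀ a, G a = (∑ b ∈ Finset.univ.filter (fun b => a ≤ b), p b) / γ)
    (k : ℕ) (hk : 1 ≤ k)
    (π : (Fin A → ℕ) → ℝ)
    (hπ : ∀ u, π u = (Nat.multinomial Finset.univ u : ℝ) * ∏ a, G a ^ u a) :
    ∀ v ∈ Finset.Nat.antidiagonalTuple A k,
      ∑ u ∈ Finset.Nat.antidiagonalTuple A k, π u * ancestralTrans p u v = π v := by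
  obtain ⟨n, rfl⟩ : ∃ n, A = n + 1 := ⟨A - 1, (Nat.succ_pred_eq_of_pos hA).symm⟩
  intro v hv
  have hvsum : ∑ a, v a = k := Finset.Nat.mem_antidiagonalTuple.mp hv
  have hγ0 : 0 < γ := by
    rw [hγ]
    refine Finset.sum_pos (fun a _ => ?_) Finset.univ_nonempty
    have := hp a
    positivity
  have hG0 : G 0 = 1 / γ := by
    rw [hG]
    have h1 : Finset.univ.filter (fun b => (0 : Fin (n+1)) ≤ b) = Finset.univ :=
      Finset.filter_true_of_mem (fun b _ => Fin.zero_le b)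
    rw [h1, hpsum]
  set Gs : Fin (n+1) → ℝ := fun a =>
    if h : (a : ℕ) + 1 < n + 1 then G ⟨(a : ℕ) + 1, h⟩ else 0 with hGsdef
  have hGsLast : Gs (Fin.last n) = 0 := by simp [hGsdef]
  have hGsCast : ∀ i : Fin n, Gs i.castSucc = G i.succ := by
    intro i
    have h : ((i.castSucc : Fin (n+1)) : ℕ) + 1 < n + 1 := by simp
    simp only [hGsdef, dif_pos h]
    exact congrArg G (Fin.ext (by simp))
  have hGsplit : ∀ a : Fin (n+1), G a = Gs a + p a / γ := by
    intro a
    by_cases h : (a : ℕ) + 1 < n + 1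
    · have hins : Finset.univ.filter (fun b => a ≤ b)
          = insert a (Finset.univ.filter (fun b => (⟨(a:ℕ)+1, h⟩ : Fin (n+1)) ≤ b)) := by
        ext b
        simp only [Finset.mem_filter, Finset.mem_univ, true_and, Finset.mem_insert,
          Fin.le_def, Fin.ext_iff]
        omega
      have hnotmem : a ∉ Finset.univ.filter (fun b => (⟨(a:ℕ)+1, h⟩ : Fin (n+1)) ≤ b) := by
        simp [Fin.le_def]
      rw [hG, hGsdef]
      simp only [dif_pos h]
      rw [hG, hins, Finset.sum_insert hnotmem, add_div, add_comm]
    · have hsingle : Finset.univ.filter (fun b => a ≤ b) = {a} := by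
        ext b
        have h1 := b.isLt
        have h2 := a.isLt
        simp only [Finset.mem_filter, Finset.mem_univ, true_and, Finset.mem_singleton,
          Fin.le_def, Fin.ext_iff]
        omega
      rw [hG, hGsdef]
      simp only [dif_neg h]
      rw [hsingle, Finset.sum_singleton, zero_add]
  set f : Fin (n+1) → ℕ → ℝ := fun a j =>
    Gs a ^ (v a - j) * (p a / γ) ^ j / (((v a - j).factorial : ℝ) * (j.factorial : ℝ))
    with hfdef
  have hπv : π v = (k.factorial : ℝ) * ∏ a, (G a ^ v a / ((v a).factorial : ℝ)) := by
    rw [hπ, multinomial_cast, hvsum, Finset.prod_div_distrib]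
    ring
  have hcol : ∀ a, ∑ j ∈ Finset.range (v a + 1), f a j
      = G a ^ v a / ((v a).factorial : ℝ) := by
    intro a
    rw [hGsplit a]
    exact binom_aux (Gs a) (p a / γ) (v a)
  have hprodsum : ∏ a, (G a ^ v a / ((v a).factorial : ℝ))
      = ∑ w ∈ Fintype.piFinset (fun a => Finset.range (v a + 1)), ∏ a, f a (w a) := by
    rw [← Finset.prod_univ_sum]
    exact (Finset.prod_congr rfl fun a _ => hcol a).symm
  set T := (Fintype.piFinset (fun a : Fin (n+1) => Finset.range (v a + 1))).filter
      (fun w => w (Fin.last n) = v (Fin.last n)) with hT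
  have hrestrict : ∑ w ∈ Fintype.piFinset (fun a : Fin (n+1) => Finset.range (v a + 1)),
      ∏ a, f a (w a) = ∑ w ∈ T, ∏ a, f a (w a) := by
    rw [hT]
    refine (Finset.sum_filter_of_ne ?_).symm
    intro w hw hne
    by_contra hlast
    apply hne
    apply Finset.prod_eq_zero (Finset.mem_univ (Fin.last n))
    have hwle : w (Fin.last n) ≤ v (Fin.last n) :=
      Nat.lt_succ_iff.mp (Finset.mem_range.mp (Fintype.mem_piFinset.mp hw _))
    have hlt : v (Fin.last n) - w (Fin.last n) ≠ 0 := by omega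
    simp only [hfdef, hGsLast, zero_pow hlt, zero_mul, zero_div]
  have hwsum : ∀ u : Fin (n+1) → ℕ, (∑ a, u a = k) → (∀ a, ageShift u a ≤ v a) →
      ∑ a, (v a - ageShift u a) = u 0 := by
    intro u hs hc
    have h1 : ∑ a, (v a - ageShift u a) + ∑ a, ageShift u a = k := by
      rw [← hvsum, ← Finset.sum_add_distrib]
      refine Finset.sum_congr rfl fun a _ => ?_
      have := hc a
      omega
    have h2 : ∑ a, ageShift u a = ∑ i : Fin n, u i.succ := by
      rw [Fin.sum_univ_castSucc]
      simp only [ageShift_castSucc, ageShift_last, add_zero]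
    have h3 : ∑ a, u a = u 0 + ∑ i : Fin n, u i.succ := Fin.sum_univ_succ u
    omega
  have hfilter : ∑ u ∈ Finset.Nat.antidiagonalTuple (n+1) k, π u * ancestralTrans p u v
      = ∑ u ∈ (Finset.Nat.antidiagonalTuple (n+1) k).filter
          (fun u => ∀ a, ageShift u a ≤ v a),
        π u * ((Nat.multinomial Finset.univ (fun a => v a - ageShift u a) : ℝ) *
          ∏ a, p a ^ (v a - ageShift u a)) := by
    rw [Finset.sum_filter]
    refine Finset.sum_congr rfl fun u _ => ?_
    rw [ancestralTrans]
    split_ifs with h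
    · rfl
    · rw [mul_zero]
  have hbij : ∑ u ∈ (Finset.Nat.antidiagonalTuple (n+1) k).filter
          (fun u => ∀ a, ageShift u a ≤ v a),
        π u * ((Nat.multinomial Finset.univ (fun a => v a - ageShift u a) : ℝ) *
          ∏ a, p a ^ (v a - ageShift u a))
      = ∑ w ∈ T, (k.factorial : ℝ) * ∏ a, f a (w a) := by
    refine Finset.sum_nbij' (fun u (a : Fin (n+1)) => v a - ageShift u a)
      (fun w => Fin.cons (∑ a, w a) (fun i : Fin n => v i.castSucc - w i.castSucc))
      ?_ ?_ ?_ ?_ ?_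
    · -- maps into T
      intro u hu
      rw [hT, Finset.mem_filter]
      constructor
      · rw [Fintype.mem_piFinset]
        intro a
        rw [Finset.mem_range]
        show v a - ageShift u a < v a + 1
        omega
      · show v (Fin.last n) - ageShift u (Fin.last n) = v (Fin.last n)
        rw [ageShift_last, Nat.sub_zero]
    · -- maps into the filtered antidiagonal
      intro w hw
      rw [hT, Finset.mem_filter] at hw
      obtain ⟨hw1, hw2⟩ := hw
      rw [Fintype.mem_piFinset] at hw1
      have hwle : ∀ a, w a ≤ v a := fun a => Nat.lt_succ_iff.mp (Finset.mem_range.mp (hw1 a))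
      rw [Finset.mem_filter]
      constructor
      · rw [Finset.Nat.mem_antidiagonalTuple, Fin.sum_univ_succ]
        simp only [Fin.cons_zero, Fin.cons_succ]
        have e1 : ∑ i : Fin n, (v i.castSucc - w i.castSucc) + ∑ i : Fin n, w i.castSucc
            = ∑ i : Fin n, v i.castSucc := by
          rw [← Finset.sum_add_distrib]
          refine Finset.sum_congr rfl fun i _ => ?_
          have := hwle i.castSucc
          omega
        have e2 : ∑ a, v a = ∑ i : Fin n, v i.castSucc + v (Fin.last n) := Fin.sum_univ_castSucc v
        have e3 : ∑ a, w a = ∑ i : Fin n, w i.castSucc + w (Fin.last n) := Fin.sum_univ_castSucc w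
        omega
      · intro a
        by_cases h : (a : ℕ) + 1 < n + 1
        · have hi : (a : ℕ) < n := by omega
          have hai : (⟨(a : ℕ), hi⟩ : Fin n).castSucc = a := Fin.ext rfl
          have hsucc : (⟨(a : ℕ) + 1, h⟩ : Fin (n+1)) = (⟨(a : ℕ), hi⟩ : Fin n).succ :=
            Fin.ext rfl
          simp only [ageShift, dif_pos h, hsucc, Fin.cons_succ, hai]
          exact Nat.sub_le _ _
        · simp only [ageShift, dif_neg h]
          exact Nat.zero_le _
    · -- left inverse
      intro u hu
      rw [Finset.mem_filter, Finset.Nat.mem_antidiagonalTuple] at hu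
      obtain ⟨hus, huc⟩ := hu
      beta_reduce
      funext a
      refine Fin.cases ?_ ?_ a
      · rw [Fin.cons_zero]
        exact hwsum u hus huc
      · intro i
        rw [Fin.cons_succ, ageShift_castSucc]
        have := huc i.castSucc
        rw [ageShift_castSucc] at this
        omega
    · -- right inverse
      intro w hw
      rw [hT, Finset.mem_filter] at hw
      obtain ⟨hw1, hw2⟩ := hw
      rw [Fintype.mem_piFinset] at hw1
      have hwle : ∀ a, w a ≤ v a := fun a => Nat.lt_succ_iff.mp (Finset.mem_range.mp (hw1 a))
      beta_reduce
      funext a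
      by_cases h : (a : ℕ) + 1 < n + 1
      · have hi : (a : ℕ) < n := by omega
        have hai : (⟨(a : ℕ), hi⟩ : Fin n).castSucc = a := Fin.ext rfl
        have hsucc : (⟨(a : ℕ) + 1, h⟩ : Fin (n+1)) = (⟨(a : ℕ), hi⟩ : Fin n).succ := Fin.ext rfl
        simp only [ageShift, dif_pos h, hsucc, Fin.cons_succ, hai]
        have := hwle a
        omega
      · have ha : a = Fin.last n := Fin.ext (by have := a.isLt; simp only [Fin.val_last]; omega)
        simp only [ageShift, dif_neg h]
        rw [ha, Nat.sub_zero, hw2]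
    · -- per-term equality
      intro u hu
      rw [Finset.mem_filter, Finset.Nat.mem_antidiagonalTuple] at hu
      obtain ⟨hus, huc⟩ := hu
      beta_reduce
      have hw0 : ∑ a, (v a - ageShift u a) = u 0 := hwsum u hus huc
      have hred : ∀ a, v a - (v a - ageShift u a) = ageShift u a := fun a => by
        have := huc a; omega
      rw [hπ, multinomial_cast, multinomial_cast, hus]
      rw [hw0]
      have hR : ∏ a, f a (v a - ageShift u a)
          = (∏ a, (Gs a ^ ageShift u a / ((ageShift u a).factorial : ℝ)))
            * ((∏ a, p a ^ (v a - ageShift u a))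
                / (∏ a, (((v a - ageShift u a).factorial : ℝ))))
            * (1 / γ) ^ u 0 := by
        rw [← hw0, ← Finset.prod_pow_eq_pow_sum, ← Finset.prod_div_distrib,
          ← Finset.prod_mul_distrib, ← Finset.prod_mul_distrib]
        refine Finset.prod_congr rfl fun a _ => ?_
        simp only [hfdef]
        rw [hred a, div_pow]
        ring
      rw [hR]
      have e2 : ∏ a, (Gs a ^ ageShift u a / ((ageShift u a).factorial : ℝ))
          = ∏ i : Fin n, (G i.succ ^ u i.succ / ((u i.succ).factorial : ℝ)) := by
        rw [Fin.prod_univ_castSucc]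
        have hl : Gs (Fin.last n) ^ ageShift u (Fin.last n)
            / ((ageShift u (Fin.last n)).factorial : ℝ) = 1 := by
          rw [ageShift_last]
          simp
        rw [hl, mul_one]
        exact Finset.prod_congr rfl fun i _ => by rw [ageShift_castSucc, hGsCast]
      rw [e2, ← hG0]
      have e1' : (∏ a, G a ^ u a) / (∏ a, ((u a).factorial : ℝ))
          = G 0 ^ u 0 / ((u 0).factorial : ℝ)
            * ∏ i : Fin n, (G i.succ ^ u i.succ / ((u i.succ).factorial : ℝ)) := by
        rw [← Finset.prod_div_distrib]
        exact Fin.prod_univ_succ _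
      have hU : (∏ a, ((u a).factorial : ℝ)) ≠ 0 :=
        Finset.prod_ne_zero_iff.mpr fun a _ => Nat.cast_ne_zero.mpr (Nat.factorial_ne_zero _)
      have hW : (∏ a, (((v a - ageShift u a).factorial : ℝ))) ≠ 0 :=
        Finset.prod_ne_zero_iff.mpr fun a _ => Nat.cast_ne_zero.mpr (Nat.factorial_ne_zero _)
      have hu0 : ((u 0).factorial : ℝ) ≠ 0 := Nat.cast_ne_zero.mpr (Nat.factorial_ne_zero _)
      field_simp at e1' ⊢
      linear_combination (∏ a, p a ^ (v a - ageShift u a)) * e1'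
  rw [hfilter, hbij, ← Finset.mul_sum, ← hrestrict, ← hprodsum, ← hπv]
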